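/- arXiv:1405.6793 — 2 statements merged into one kernel-verified Lean document; each statement's English description precedes it below -/
import Mathlib

section
/- Let Z be a standard normal random variable. For every fixed real x, p · P(Z^2 > 2·log p − log log p + x) converges to exp(−(x + log π)/2) as the integer p tends to infinity. -/
open MeasureTheory ProbabilityTheory Filter Real

noncomputable def phi (s : ℝ) : ℝ := (Real.sqrt (2 * π))⁻¹ * Real.exp (-s ^ 2 / 2)

lemma gaussianPDFReal_eq_phi (s : ℝ) : gaussianPDFReal 0 1 s = phi s := by
  simp [gaussianPDFReal, phi]

lemma phi_pos (s : ℝ) : 0 < phi s := by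
  rw [← gaussianPDFReal_eq_phi]; exact gaussianPDFReal_pos 0 1 s one_ne_zero

lemma integrable_phi : Integrable phi := by
  have := integrable_gaussianPDFReal 0 1
  simpa [funext gaussianPDFReal_eq_phi] using this

lemma phi_tendsto : Tendsto phi atTop (nhds 0) := by
  have h : Tendsto (fun s : ℝ => -s ^ 2 / 2) atTop atBot := by
    apply Tendsto.atBot_div_const (by norm_num)
    apply tendsto_neg_atBot_iff.2
    exact tendsto_pow_atTop (by norm_num)
  have := (Real.tendsto_exp_atBot).comp h
  have h2 := this.const_mul ((Real.sqrt (2 * π))⁻¹)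
  rw [mul_zero] at h2
  exact h2

lemma hasDerivAt_phi (s : ℝ) : HasDerivAt phi (-s * phi s) s := by
  have h1 : HasDerivAt (fun s : ℝ => -s ^ 2 / 2) (-s) s := by
    have := ((hasDerivAt_pow 2 s).neg).div_const 2
    refine this.congr_deriv ?_
    ring
  have := (h1.exp).const_mul ((Real.sqrt (2 * π))⁻¹)
  refine this.congr_deriv ?_
  unfold phi; ring

lemma mill_upper {t : ℝ} (ht : 0 < t) : ∫ s in Set.Ioi t, phi s ≤ phi t / t := by
  set f' : ℝ → ℝ := fun s => phi s + phi s / s ^ 2 with hf'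
  have hderiv : ∀ s ∈ Set.Ici t, HasDerivAt (fun s => -(phi s / s)) (f' s) s := by
    intro s hs
    have hs0 : s ≠ 0 := ne_of_gt (lt_of_lt_of_le ht hs)
    have h := ((hasDerivAt_phi s).div (hasDerivAt_id s) hs0).neg
    have h2 : f' s = -((-s * phi s * id s - phi s * 1) / id s ^ 2) := by
      simp only [id_eq, hf']
      field_simp
      ring
    rw [h2]
    exact h
  have hpos : ∀ s ∈ Set.Ioi t, 0 ≤ f' s := by
    intro s hs
    have h1 := (phi_pos s).le
    exact add_nonneg h1 (div_nonneg h1 (sq_nonneg s))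
  have htend : Tendsto (fun s => -(phi s / s)) atTop (nhds 0) := by
    have h1 : Tendsto (fun s : ℝ => phi s / s) atTop (nhds 0) := by
      have := phi_tendsto.mul tendsto_inv_atTop_zero
      simpa [div_eq_mul_inv] using this
    simpa using h1.neg
  have hint : IntegrableOn f' (Set.Ioi t) :=
    integrableOn_Ioi_deriv_of_nonneg' hderiv hpos htend
  have heq : ∫ s in Set.Ioi t, f' s = phi t / t := by
    have := integral_Ioi_of_hasDerivAt_of_nonneg' hderiv hpos htend
    simpa using this
  rw [← heq]
  apply setIntegral_mono_on integrable_phi.integrableOn hint measurableSet_Ioi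
  intro s hs
  have h1 := (phi_pos s).le
  have hs0 : (0:ℝ) < s ^ 2 := by
    have : (0:ℝ) < s := lt_trans ht hs
    positivity
  show phi s ≤ phi s + phi s / s ^ 2
  linarith [div_nonneg h1 hs0.le]

lemma mill_lower {t : ℝ} (ht : 1 ≤ t) : t / (1 + t ^ 2) * phi t ≤ ∫ s in Set.Ioi t, phi s := by
  set g' : ℝ → ℝ := fun s => phi s * (1 - 2 / (1 + s ^ 2) ^ 2) with hg'
  have hderiv : ∀ s ∈ Set.Ici t, HasDerivAt (fun s => -(s / (1 + s ^ 2) * phi s)) (g' s) s := by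
    intro s _
    have hne : (1 + s ^ 2) ≠ 0 := by positivity
    have h1 : HasDerivAt (fun s : ℝ => s / (1 + s ^ 2))
        ((1 * (1 + s ^ 2) - s * (2 * s)) / (1 + s ^ 2) ^ 2) s := by
      have h2 : HasDerivAt (fun s : ℝ => 1 + s ^ 2) (2 * s) s := by
        have := (hasDerivAt_pow 2 s).const_add 1
        refine this.congr_deriv ?_
        ring
      exact (hasDerivAt_id s).div h2 hne
    have h := ((h1.mul (hasDerivAt_phi s))).neg
    have h2 : g' s = -((1 * (1 + s ^ 2) - s * (2 * s)) / (1 + s ^ 2) ^ 2 * phi s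
        + s / (1 + s ^ 2) * (-s * phi s)) := by
      simp only [hg']
      field_simp
      ring
    rw [h2]
    exact h
  have hpos : ∀ s ∈ Set.Ioi t, 0 ≤ g' s := by
    intro s hs
    have hs1 : 1 ≤ s := le_of_lt (lt_of_le_of_lt ht hs)
    have hs2 : 1 ≤ s ^ 2 := by nlinarith
    have h4 : (4:ℝ) ≤ (1 + s ^ 2) ^ 2 := by nlinarith
    have h5 : 2 / (1 + s ^ 2) ^ 2 ≤ 1 := by
      rw [div_le_one (by positivity)]; linarith
    exact mul_nonneg (phi_pos s).le (by linarith)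
  have htend : Tendsto (fun s => -(s / (1 + s ^ 2) * phi s)) atTop (nhds 0) := by
    have h1 : Tendsto (fun s : ℝ => s / (1 + s ^ 2) * phi s) atTop (nhds 0) := by
      apply tendsto_of_tendsto_of_tendsto_of_le_of_le' tendsto_const_nhds phi_tendsto
      · filter_upwards [eventually_ge_atTop (0:ℝ)] with s hs
        exact mul_nonneg (div_nonneg hs (by positivity)) (phi_pos s).le
      · filter_upwards [eventually_ge_atTop (0:ℝ)] with s hs
        have hp := (phi_pos s).le
        have h2 : s / (1 + s ^ 2) ≤ 1 := by
          rw [div_le_one (by positivity)]; nlinarith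
        nlinarith [div_nonneg hs (by positivity : (0:ℝ) ≤ 1 + s ^ 2)]
    simpa using h1.neg
  have hint : IntegrableOn g' (Set.Ioi t) :=
    integrableOn_Ioi_deriv_of_nonneg' hderiv hpos htend
  have heq : ∫ s in Set.Ioi t, g' s = t / (1 + t ^ 2) * phi t := by
    have := integral_Ioi_of_hasDerivAt_of_nonneg' hderiv hpos htend
    simpa using this
  rw [← heq]
  apply setIntegral_mono_on hint integrable_phi.integrableOn measurableSet_Ioi
  intro s hs
  have hp := (phi_pos s).le
  have h2 : 0 ≤ 2 / (1 + s ^ 2) ^ 2 := by positivity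
  show phi s * (1 - 2 / (1 + s ^ 2) ^ 2) ≤ phi s
  nlinarith

lemma tail_eq {Ω : Type*} [MeasurableSpace Ω] (P : Measure Ω) [IsProbabilityMeasure P]
    (Z : Ω → ℝ) (hmeas : Measurable Z) (hdist : Measure.map Z P = gaussianReal 0 1)
    {u : ℝ} (hu : 0 < u) :
    (P {ω | u < Z ω ^ 2}).toReal = 2 * ∫ s in Set.Ioi (Real.sqrt u), phi s := by
  have hSm : MeasurableSet {z : ℝ | u < z ^ 2} :=
    measurableSet_lt measurable_const (measurable_id.pow_const 2)
  have h1 : P {ω | u < Z ω ^ 2} = gaussianReal 0 1 {z : ℝ | u < z ^ 2} := by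
    rw [← hdist, Measure.map_apply hmeas hSm]; rfl
  set a := Real.sqrt u with ha
  have ha0 : 0 < a := Real.sqrt_pos.2 hu
  have hset : {z : ℝ | u < z ^ 2} = Set.Iio (-a) ∪ Set.Ioi a := by
    ext z
    simp only [Set.mem_setOf_eq, Set.mem_union, Set.mem_Iio, Set.mem_Ioi]
    constructor
    · intro h
      rcases le_or_gt z 0 with hz | hz
      · left
        have h2 : a < -z := by
          calc a < Real.sqrt (z ^ 2) := Real.sqrt_lt_sqrt hu.le h
          _ = |z| := Real.sqrt_sq_eq_abs z
          _ = -z := abs_of_nonpos hz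
        linarith
      · right
        calc a < Real.sqrt (z ^ 2) := Real.sqrt_lt_sqrt hu.le h
        _ = |z| := Real.sqrt_sq_eq_abs z
        _ = z := abs_of_pos hz
    · intro h
      have h2 : a < |z| := by
        rcases h with h | h
        · rw [abs_of_neg (by linarith)]; linarith
        · rw [abs_of_pos (lt_trans ha0 h)]; exact h
      have h3 : a ^ 2 < |z| ^ 2 := by nlinarith [abs_nonneg z]
      rw [sq_abs] at h3
      rw [← Real.sq_sqrt hu.le]
      exact h3
  have hdisj : Disjoint (Set.Iio (-a)) (Set.Ioi a) := by
    apply Set.disjoint_left.2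
    intro z hz1 hz2
    simp only [Set.mem_Iio, Set.mem_Ioi] at hz1 hz2
    linarith
  rw [h1, gaussianReal_apply_eq_integral 0 one_ne_zero, hset]
  simp only [gaussianPDFReal_eq_phi]
  rw [setIntegral_union hdisj measurableSet_Ioi integrable_phi.integrableOn
    integrable_phi.integrableOn]
  have hneg : ∫ s in Set.Iio (-a), phi s = ∫ s in Set.Ioi a, phi s := by
    have h4 : ∫ s in Set.Ioi a, phi (-s) = ∫ s in Set.Iic (-a), phi s :=
      integral_comp_neg_Ioi a phi
    have h5 : ∀ s, phi (-s) = phi s := by intro s; simp [phi]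
    simp only [h5] at h4
    rw [← integral_Iic_eq_integral_Iio, ← h4]
  rw [hneg, ENNReal.toReal_ofReal (add_nonneg
    (setIntegral_nonneg measurableSet_Ioi fun s _ => (phi_pos s).le)
    (setIntegral_nonneg measurableSet_Ioi fun s _ => (phi_pos s).le))]
  ring

lemma exp_half_log {y : ℝ} (hy : 0 < y) : Real.exp (Real.log y / 2) = Real.sqrt y := by
  rw [Real.sqrt_eq_rpow, Real.rpow_def_of_pos hy]
  ring_nf

lemma tendsto_self_div_one_add : Tendsto (fun y : ℝ => y / (1 + y)) atTop (nhds 1) := by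
  have h : Tendsto (fun y : ℝ => (y⁻¹ + 1)⁻¹) atTop (nhds 1) := by
    have h1 := (tendsto_inv_atTop_zero.add (tendsto_const_nhds (α := ℝ) (x := (1:ℝ))))
    have h2 := h1.inv₀ (by norm_num)
    simpa using h2
  apply h.congr'
  filter_upwards [eventually_gt_atTop (0:ℝ)] with y hy
  have h1 : 1 + y ≠ 0 := by positivity
  field_simp

/-- If `Z` is a standard normal random variable, then for every fixed real `x`,
`p · P(Z² > 2 log p − log log p + x) → exp(−(x + log π)/2)` as the integer `p → ∞`. -/
theorem scaled_chi_sq_tail_tendsto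
    {Ω : Type*} [MeasurableSpace Ω] (P : Measure Ω) [IsProbabilityMeasure P]
    (Z : Ω → ℝ) (hmeas : Measurable Z)
    (hdist : Measure.map Z P = gaussianReal 0 1)
    (x : ℝ) :
    Tendsto
      (fun p : ℕ =>
        (p : ℝ) * (P {ω | 2 * Real.log p - Real.log (Real.log p) + x < (Z ω) ^ 2}).toReal)
      atTop (nhds (Real.exp (-(x + Real.log π) / 2))) := by
  set u : ℕ → ℝ := fun p => 2 * Real.log p - Real.log (Real.log p) + x with hu
  set c : ℝ := 2 * (Real.sqrt (2 * π))⁻¹ * Real.exp (-x / 2) with hc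
  set G : ℕ → ℝ := fun p => c * Real.sqrt (Real.log p / u p) with hG
  have hlog : Tendsto (fun p : ℕ => Real.log p) atTop atTop :=
    Real.tendsto_log_atTop.comp tendsto_natCast_atTop_atTop
  -- basic eventual facts
  have hll : ∀ᶠ p : ℕ in atTop, Real.log (Real.log p) ≤ Real.log p := by
    filter_upwards [eventually_ge_atTop 2] with p hp
    have hp2 : (2:ℝ) ≤ p := by exact_mod_cast hp
    have hlp : 0 < Real.log p := Real.log_pos (by linarith)
    have hlogle : Real.log p ≤ (p:ℝ) :=
      (Real.log_le_sub_one_of_pos (by linarith)).trans (by linarith)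
    calc Real.log (Real.log p) ≤ Real.log p - 1 := Real.log_le_sub_one_of_pos hlp
    _ ≤ Real.log p := by linarith
  have hu_tend : Tendsto u atTop atTop := by
    apply tendsto_atTop_mono' atTop (show (fun p : ℕ => Real.log p + x) ≤ᶠ[atTop] u from ?_)
    · exact tendsto_atTop_add_const_right _ x hlog
    · filter_upwards [hll] with p h
      simp only [hu]
      linarith
  -- ratio limit : log p / u p → 1/2
  have hr : Tendsto (fun p : ℕ => Real.log p / u p) atTop (nhds (1/2)) := by
    have hquot : Tendsto (fun p : ℕ => u p / Real.log p) atTop (nhds 2) := by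
      have ha : Tendsto (fun p : ℕ => Real.log (Real.log p) / Real.log p) atTop (nhds 0) := by
        have h0 : Tendsto (fun y : ℝ => Real.log y / y) atTop (nhds 0) := by
          have := Real.isLittleO_log_id_atTop.tendsto_div_nhds_zero
          simpa using this
        exact h0.comp hlog
      have hb : Tendsto (fun p : ℕ => x / Real.log p) atTop (nhds 0) :=
        tendsto_const_nhds.div_atTop hlog
      have hsum : Tendsto (fun p : ℕ =>
          2 - Real.log (Real.log p) / Real.log p + x / Real.log p) atTop (nhds 2) := by
        have := (tendsto_const_nhds (x := (2:ℝ)) (α := ℕ)).sub ha |>.add hb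
        simpa using this
      apply hsum.congr'
      filter_upwards [eventually_ge_atTop 2] with p hp
      have hp2 : (2:ℝ) ≤ p := by exact_mod_cast hp
      have hlp : Real.log p ≠ 0 := ne_of_gt (Real.log_pos (by linarith))
      simp only [hu]
      field_simp
    have hinv := hquot.inv₀ (two_ne_zero)
    have : (2:ℝ)⁻¹ = 1/2 := by norm_num
    rw [this] at hinv
    apply hinv.congr'
    filter_upwards [eventually_ge_atTop 2, hu_tend.eventually_ge_atTop 1] with p hp hup
    have hp2 : (2:ℝ) ≤ p := by exact_mod_cast hp
    have hlp : Real.log p ≠ 0 := ne_of_gt (Real.log_pos (by linarith))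
    have hup0 : u p ≠ 0 := by positivity
    simp [div_div_eq_mul_div, inv_div]
  -- limit of G
  have hGt : Tendsto G atTop (nhds (Real.exp (-(x + Real.log π) / 2))) := by
    have h1 : Tendsto G atTop (nhds (c * Real.sqrt (1/2))) :=
      (hr.sqrt).const_mul c
    have h2 : c * Real.sqrt (1/2) = Real.exp (-(x + Real.log π) / 2) := by
      have hs2 : Real.sqrt (2 * π) = Real.sqrt 2 * Real.sqrt π :=
        Real.sqrt_mul (by norm_num) π
      have h12 : Real.sqrt (1/2 : ℝ) = (Real.sqrt 2)⁻¹ := by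
        rw [one_div, Real.sqrt_inv]
      have hπ : (Real.sqrt π)⁻¹ = Real.exp (-(Real.log π) / 2) := by
        rw [← exp_half_log pi_pos, ← Real.exp_neg]
        ring_nf
      have hsqrt2 : Real.sqrt 2 * Real.sqrt 2 = 2 := Real.mul_self_sqrt (by norm_num)
      have hs2ne : Real.sqrt 2 ≠ 0 := by positivity
      have hsπne : Real.sqrt π ≠ 0 := by positivity
      have hkey : 2 * (Real.sqrt (2 * π))⁻¹ * Real.sqrt (1/2 : ℝ) = (Real.sqrt π)⁻¹ := by
        rw [hs2, h12]
        field_simp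
        nlinarith [hsqrt2, Real.sqrt_nonneg π]
      calc c * Real.sqrt (1/2 : ℝ)
          = Real.exp (-x/2) * (2 * (Real.sqrt (2 * π))⁻¹ * Real.sqrt (1/2 : ℝ)) := by
            rw [hc]; ring
        _ = Real.exp (-x/2) * Real.exp (-(Real.log π) / 2) := by rw [hkey, hπ]
        _ = Real.exp (-(x + Real.log π) / 2) := by rw [← Real.exp_add]; ring_nf
    rw [h2] at h1
    exact h1
  -- limit of lower sequence
  have hct : Tendsto (fun p : ℕ => u p / (1 + u p)) atTop (nhds 1) :=
    tendsto_self_div_one_add.comp hu_tend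
  have hLt : Tendsto (fun p : ℕ => G p * (u p / (1 + u p))) atTop
      (nhds (Real.exp (-(x + Real.log π) / 2))) := by
    have := hGt.mul hct
    simpa using this
  -- squeeze
  apply tendsto_of_tendsto_of_tendsto_of_le_of_le' hLt hGt
  · -- lower bound
    filter_upwards [eventually_ge_atTop 2, hu_tend.eventually_ge_atTop 1] with p hp hup
    have hp2 : (2:ℝ) ≤ p := by exact_mod_cast hp
    have hp0 : (0:ℝ) < p := by linarith
    have hlp : 0 < Real.log p := Real.log_pos (by linarith)
    have hup0 : 0 < u p := lt_of_lt_of_le one_pos hup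
    set t := Real.sqrt (u p) with htdef
    have htsq : t ^ 2 = u p := Real.sq_sqrt hup0.le
    have ht1 : 1 ≤ t := by
      have := Real.sqrt_le_sqrt hup
      rwa [Real.sqrt_one] at this
    have ht0 : 0 < t := lt_of_lt_of_le one_pos ht1
    have hphi : phi t = (Real.sqrt (2 * π))⁻¹ *
        ((p:ℝ)⁻¹ * Real.sqrt (Real.log p) * Real.exp (-x/2)) := by
      have he : -t ^ 2 / 2 = -Real.log p + (Real.log (Real.log p) / 2 + -x/2) := by
        rw [htsq]; simp only [hu]; ring
      rw [phi, he, Real.exp_add, Real.exp_add, Real.exp_neg, Real.exp_log hp0,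
        exp_half_log hlp]
      ring
    rw [tail_eq P Z hmeas hdist hup0]
    have hml := mill_lower ht1
    have heq : G p * (u p / (1 + u p)) = (p:ℝ) * (2 * (t / (1 + t ^ 2) * phi t)) := by
      have hGp : G p = c * (Real.sqrt (Real.log p) / t) := by
        simp only [hG, htdef, Real.sqrt_div hlp.le]
      rw [hGp, hphi, hc, ← htsq]
      have h1t : (0:ℝ) < 1 + t ^ 2 := by positivity
      field_simp
    rw [heq]
    have h20 : (0:ℝ) ≤ (p:ℝ) * 2 := by positivity
    calc (p:ℝ) * (2 * (t / (1 + t ^ 2) * phi t)) = (p:ℝ) * 2 * (t / (1 + t ^ 2) * phi t) := by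
          ring
      _ ≤ (p:ℝ) * 2 * ∫ s in Set.Ioi t, phi s := by
          exact mul_le_mul_of_nonneg_left hml h20
      _ = (p:ℝ) * (2 * ∫ s in Set.Ioi t, phi s) := by ring
  · -- upper bound
    filter_upwards [eventually_ge_atTop 2, hu_tend.eventually_ge_atTop 1] with p hp hup
    have hp2 : (2:ℝ) ≤ p := by exact_mod_cast hp
    have hp0 : (0:ℝ) < p := by linarith
    have hlp : 0 < Real.log p := Real.log_pos (by linarith)
    have hup0 : 0 < u p := lt_of_lt_of_le one_pos hup
    set t := Real.sqrt (u p) with htdef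
    have htsq : t ^ 2 = u p := Real.sq_sqrt hup0.le
    have ht1 : 1 ≤ t := by
      have := Real.sqrt_le_sqrt hup
      rwa [Real.sqrt_one] at this
    have ht0 : 0 < t := lt_of_lt_of_le one_pos ht1
    have hphi : phi t = (Real.sqrt (2 * π))⁻¹ *
        ((p:ℝ)⁻¹ * Real.sqrt (Real.log p) * Real.exp (-x/2)) := by
      have he : -t ^ 2 / 2 = -Real.log p + (Real.log (Real.log p) / 2 + -x/2) := by
        rw [htsq]; simp only [hu]; ring
      rw [phi, he, Real.exp_add, Real.exp_add, Real.exp_neg, Real.exp_log hp0,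
        exp_half_log hlp]
      ring
    rw [tail_eq P Z hmeas hdist hup0]
    have hmu := mill_upper ht0
    have heq : G p = (p:ℝ) * (2 * (phi t / t)) := by
      have hGp : G p = c * (Real.sqrt (Real.log p) / t) := by
        simp only [hG, htdef, Real.sqrt_div hlp.le]
      rw [hGp, hphi, hc]
      field_simp
    rw [heq]
    have h20 : (0:ℝ) ≤ (p:ℝ) * 2 := by positivity
    calc (p:ℝ) * (2 * ∫ s in Set.Ioi t, phi s)
        = (p:ℝ) * 2 * ∫ s in Set.Ioi t, phi s := by ring
      _ ≤ (p:ℝ) * 2 * (phi t / t) := mul_le_mul_of_nonneg_left hmu h20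
      _ = (p:ℝ) * (2 * (phi t / t)) := by ring
end

section
/- Fix α ∈ (0, 1) and let q_{1−α} = −log π − 2·log(−log(1 − α)), which is the (1−α)-quantile of the Gumbel(−log π, 2) distribution. Let (Z_i)_{i≥1} be i.i.d. standard normal random variables and set T̃_p = max_{1≤i≤p} Z_i² − 2·log p + log log p. Then P(T̃_p ≥ q_{1−α}) → α as p → ∞; that is, the test that rejects when T̃_p ≥ q_{1−α} has asymptotic level exactly α. -/
open MeasureTheory ProbabilityTheory Filter Real
open Set ENNReal
open scoped Topology

lemma aux_hasDerivAt_negexp (x : ℝ) :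
    HasDerivAt (fun y : ℝ => -Real.exp (-y^2/2)) (x * Real.exp (-x^2/2)) x := by
  have h1 : HasDerivAt (fun y : ℝ => -y^2/2) (-x) x := by
    have := ((hasDerivAt_pow 2 x).neg).div_const 2
    exact this.congr_deriv (by push_cast; ring)
  have h2 := (h1.exp).neg
  exact h2.congr_deriv (by ring)

lemma aux_tendsto_exp_negsq : Tendsto (fun y : ℝ => Real.exp (-y^2/2)) atTop (nhds 0) := by
  apply Real.tendsto_exp_atBot.comp
  have h1 : Tendsto (fun y : ℝ => y^2) atTop atTop := tendsto_pow_atTop (by norm_num)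
  have h2 := tendsto_neg_atTop_atBot.comp h1
  exact (tendsto_div_const_atBot_of_pos (by norm_num)).mpr h2

lemma aux_tendsto_neg_exp_negsq : Tendsto (fun y : ℝ => -Real.exp (-y^2/2)) atTop (nhds 0) := by
  simpa using aux_tendsto_exp_negsq.neg

lemma aux_integral_x_exp {s : ℝ} (hs : 0 < s) :
    ∫ x in Ioi s, x * Real.exp (-x^2/2) = Real.exp (-s^2/2) := by
  have := integral_Ioi_of_hasDerivAt_of_nonneg' (g := fun y : ℝ => -Real.exp (-y^2/2))
    (g' := fun x => x * Real.exp (-x^2/2)) (a := s) (l := 0)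
    (fun x _ => aux_hasDerivAt_negexp x)
    (fun x hx => mul_nonneg (le_of_lt (hs.trans hx)) (Real.exp_nonneg _))
    aux_tendsto_neg_exp_negsq
  simpa using this

lemma aux_integrableOn_x_exp {s : ℝ} (hs : 0 < s) :
    IntegrableOn (fun x => x * Real.exp (-x^2/2)) (Ioi s) :=
  integrableOn_Ioi_deriv_of_nonneg' (fun x _ => aux_hasDerivAt_negexp x)
    (fun x hx => mul_nonneg (le_of_lt (hs.trans hx)) (Real.exp_nonneg _))
    aux_tendsto_neg_exp_negsq

lemma aux_integrableOn_exp (s : ℝ) :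
    IntegrableOn (fun x : ℝ => Real.exp (-x^2/2)) (Ioi s) := by
  have : (fun x : ℝ => Real.exp (-x^2/2)) = fun x : ℝ => Real.exp (-(1/2) * x^2) := by
    funext x; ring_nf
  rw [this]
  exact (integrable_exp_neg_mul_sq (by norm_num)).integrableOn

lemma aux_tail_upper {s : ℝ} (hs : 0 < s) :
    ∫ x in Ioi s, Real.exp (-x^2/2) ≤ Real.exp (-s^2/2) / s := by
  have h1 : ∫ x in Ioi s, Real.exp (-x^2/2) ≤ ∫ x in Ioi s, s⁻¹ * (x * Real.exp (-x^2/2)) := by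
    apply setIntegral_mono_on (aux_integrableOn_exp s)
      ((aux_integrableOn_x_exp hs).const_mul _) measurableSet_Ioi
    intro x hx
    rw [← mul_assoc]
    nth_rewrite 1 [← one_mul (Real.exp (-x^2/2))]
    apply mul_le_mul_of_nonneg_right _ (Real.exp_nonneg _)
    rw [inv_mul_eq_div, le_div_iff₀ hs, one_mul]
    exact le_of_lt hx
  rw [MeasureTheory.integral_const_mul, aux_integral_x_exp hs] at h1
  rw [div_eq_inv_mul]
  exact h1

lemma aux_hasDerivAt_lower {x : ℝ} (hx : 0 < x) :
    HasDerivAt (fun y : ℝ => -((y⁻¹ - (y^3)⁻¹) * Real.exp (-y^2/2)))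
      ((1 - 3/x^4) * Real.exp (-x^2/2)) x := by
  have hne : x ≠ 0 := ne_of_gt hx
  have h1 : HasDerivAt (fun y : ℝ => y⁻¹ - (y^3)⁻¹) (-(x^2)⁻¹ - (-(3*x^2) / (x^3)^2)) x :=
    (hasDerivAt_inv hne).sub (((hasDerivAt_pow 3 x).inv (pow_ne_zero 3 hne)).congr_deriv
      (by push_cast; ring))
  have h2 : HasDerivAt (fun y : ℝ => -y^2/2) (-x) x := by
    have := ((hasDerivAt_pow 2 x).neg).div_const 2
    exact this.congr_deriv (by push_cast; ring)
  have h3 := (h1.mul h2.exp).neg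
  refine h3.congr_deriv ?_
  field_simp
  ring

lemma aux_tendsto_lower : Tendsto (fun y : ℝ => -((y⁻¹ - (y^3)⁻¹) * Real.exp (-y^2/2)))
    atTop (nhds 0) := by
  have h1 : Tendsto (fun y : ℝ => y⁻¹ - (y^3)⁻¹) atTop (nhds 0) := by
    have := (tendsto_inv_atTop_zero (𝕜 := ℝ)).sub
      ((tendsto_pow_atTop (n := 3) (by norm_num)).inv_tendsto_atTop)
    simpa using this
  simpa using (h1.mul aux_tendsto_exp_negsq).neg

lemma aux_lower_nonneg {s : ℝ} (hs : 2 ≤ s) {x : ℝ} (hx : x ∈ Ioi s) :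
    0 ≤ (1 - 3/x^4) * Real.exp (-x^2/2) := by
  have hx2 : (2:ℝ) < x := lt_of_le_of_lt hs hx
  have h16 : (16:ℝ) ≤ x^4 := by
    have h4 : (4:ℝ) ≤ x^2 := by nlinarith
    calc (16:ℝ) = 4*4 := by norm_num
    _ ≤ x^2 * x^2 := by nlinarith
    _ = x^4 := by ring
  have h3 : 3/x^4 ≤ 3/16 := by
    apply div_le_div_of_nonneg_left (by norm_num) (by norm_num) h16
  have := Real.exp_nonneg (-x^2/2)
  nlinarith

lemma aux_integral_lower {s : ℝ} (hs : 2 ≤ s) :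
    ∫ x in Ioi s, (1 - 3/x^4) * Real.exp (-x^2/2)
      = (s⁻¹ - (s^3)⁻¹) * Real.exp (-s^2/2) := by
  have hs0 : 0 < s := lt_of_lt_of_le (by norm_num) hs
  have := integral_Ioi_of_hasDerivAt_of_nonneg'
    (g := fun y : ℝ => -((y⁻¹ - (y^3)⁻¹) * Real.exp (-y^2/2)))
    (g' := fun x => (1 - 3/x^4) * Real.exp (-x^2/2)) (a := s) (l := 0)
    (fun x hx => aux_hasDerivAt_lower (lt_of_lt_of_le hs0 hx))
    (fun x hx => aux_lower_nonneg hs hx) aux_tendsto_lower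
  simpa using this

lemma aux_integrableOn_lower {s : ℝ} (hs : 2 ≤ s) :
    IntegrableOn (fun x => (1 - 3/x^4) * Real.exp (-x^2/2)) (Ioi s) := by
  have hs0 : 0 < s := lt_of_lt_of_le (by norm_num) hs
  exact integrableOn_Ioi_deriv_of_nonneg'
    (fun x hx => aux_hasDerivAt_lower (lt_of_lt_of_le hs0 hx))
    (fun x hx => aux_lower_nonneg hs hx) aux_tendsto_lower

lemma aux_tail_lower {s : ℝ} (hs : 2 ≤ s) :
    (s⁻¹ - (s^3)⁻¹) * Real.exp (-s^2/2) ≤ ∫ x in Ioi s, Real.exp (-x^2/2) := by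
  rw [← aux_integral_lower hs]
  apply setIntegral_mono_on (aux_integrableOn_lower hs) (aux_integrableOn_exp s)
    measurableSet_Ioi
  intro x hx
  nth_rewrite 2 [← one_mul (Real.exp (-x^2/2))]
  apply mul_le_mul_of_nonneg_right _ (Real.exp_nonneg _)
  have hx2 : (2:ℝ) < x := lt_of_le_of_lt hs hx
  have : 0 < x^4 := by positivity
  have : 0 ≤ 3/x^4 := by positivity
  linarith

lemma aux_pdf_eq (x : ℝ) : gaussianPDFReal 0 1 x = (Real.sqrt (2*π))⁻¹ * Real.exp (-x^2/2) := by
  simp [gaussianPDFReal]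

lemma aux_set_eq {t : ℝ} (ht : 0 < t) :
    {x : ℝ | t ≤ x^2} = Iic (-Real.sqrt t) ∪ Ici (Real.sqrt t) := by
  ext x
  simp only [mem_setOf_eq, mem_union, mem_Iic, mem_Ici]
  rw [show t ≤ x^2 ↔ Real.sqrt t ≤ |x| by
    constructor
    · intro h
      rw [← Real.sqrt_sq_eq_abs]
      exact Real.sqrt_le_sqrt h
    · intro h
      calc t = (Real.sqrt t)^2 := (Real.sq_sqrt ht.le).symm
      _ ≤ |x|^2 := pow_le_pow_left₀ (Real.sqrt_nonneg t) h 2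
      _ = x^2 := sq_abs x]
  rw [le_abs]
  constructor
  · rintro (h | h); · right; exact h
    · left; linarith
  · rintro (h | h); · right; linarith
    · left; exact h

lemma aux_gauss_tail {t : ℝ} (ht : 0 < t) :
    ((gaussianReal 0 1) {x : ℝ | t ≤ x^2}).toReal
      = 2 * (Real.sqrt (2*π))⁻¹ * ∫ x in Ioi (Real.sqrt t), Real.exp (-x^2/2) := by
  have hst : 0 < Real.sqrt t := Real.sqrt_pos.mpr ht
  rw [gaussianReal_apply_eq_integral 0 one_ne_zero, ENNReal.toReal_ofReal]
  swap
  · apply setIntegral_nonneg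
    · exact (measurableSet_le measurable_const (measurable_id.pow_const 2))
    · exact fun x _ => gaussianPDFReal_nonneg 0 1 x
  rw [aux_set_eq ht, setIntegral_union (by
      rw [Set.disjoint_iff]
      rintro x ⟨h1, h2⟩
      simp only [mem_Iic, mem_Ici] at h1 h2
      linarith) measurableSet_Ici
      ((integrable_gaussianPDFReal 0 1).integrableOn)
      ((integrable_gaussianPDFReal 0 1).integrableOn)]
  have hsym : ∫ x in Iic (-Real.sqrt t), gaussianPDFReal 0 1 x
      = ∫ x in Ioi (Real.sqrt t), gaussianPDFReal 0 1 x := by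
    have h := integral_comp_neg_Iic (-Real.sqrt t) (gaussianPDFReal 0 1)
    rw [neg_neg] at h
    rw [← h]
    congr 1; funext x
    simp [aux_pdf_eq]
  rw [hsym, integral_Ici_eq_integral_Ioi]
  simp_rw [aux_pdf_eq]
  rw [MeasureTheory.integral_const_mul]
  ring

lemma aux_const_eval {L : ℝ} :
    2 * (Real.sqrt (2*π))⁻¹ * (Real.sqrt π * L) * Real.sqrt 2⁻¹ = L := by
  rw [Real.sqrt_mul (by norm_num) π, Real.sqrt_inv]
  have h2 : Real.sqrt 2 * Real.sqrt 2 = 2 := Real.mul_self_sqrt (by norm_num)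
  have h2pos : (0:ℝ) < Real.sqrt 2 := Real.sqrt_pos.mpr (by norm_num)
  have hπpos : (0:ℝ) < Real.sqrt π := Real.sqrt_pos.mpr Real.pi_pos
  field_simp
  linear_combination (-L) * h2

lemma aux_pg_limit (q L : ℝ) (hL : 0 < L) (hq : Real.exp (-q/2) = Real.sqrt π * L) :
    Tendsto (fun p : ℕ => (p:ℝ) *
      ((gaussianReal 0 1) {x : ℝ | q + 2*Real.log p - Real.log (Real.log p) ≤ x^2}).toReal)
      atTop (nhds L) := by
  set t : ℕ → ℝ := fun p => q + 2*Real.log p - Real.log (Real.log p) with ht_def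
  clear_value t
  have hlog : Tendsto (fun p : ℕ => Real.log p) atTop atTop :=
    Real.tendsto_log_atTop.comp tendsto_natCast_atTop_atTop
  have hloglog : Tendsto (fun p : ℕ => Real.log (Real.log p) / Real.log p) atTop (nhds 0) := by
    have h0 : Tendsto (fun y : ℝ => Real.log y / y) atTop (nhds 0) :=
      Real.isLittleO_log_id_atTop.tendsto_div_nhds_zero
    exact h0.comp hlog
  have hratio : Tendsto (fun p : ℕ => t p / Real.log p) atTop (nhds 2) := by
    have h1 : Tendsto (fun p : ℕ => q / Real.log p) atTop (nhds 0) :=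
      tendsto_const_nhds.div_atTop hlog
    have h2 : (fun p : ℕ => t p / Real.log p) =ᶠ[atTop]
        (fun p => q / Real.log p + 2 - Real.log (Real.log p) / Real.log p) := by
      filter_upwards [hlog.eventually_gt_atTop 0] with p hp
      simp only [ht_def]
      rw [sub_div, add_div, mul_div_assoc, div_self (ne_of_gt hp), mul_one]
    rw [show (2:ℝ) = 0 + 2 - 0 by norm_num]
    exact Tendsto.congr' h2.symm (((h1.add_const 2).sub hloglog))
  have ht_top : Tendsto t atTop atTop := by
    have hev : ∀ᶠ p : ℕ in atTop, Real.log p ≤ t p := by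
      filter_upwards [hratio.eventually (eventually_ge_nhds (by norm_num : (1:ℝ) < 2)),
        hlog.eventually_gt_atTop 0] with p h1 h2
      simpa using (le_div_iff₀ h2).mp h1
    exact tendsto_atTop_mono' _ hev hlog
  have hinv : Tendsto (fun p : ℕ => Real.log p / t p) atTop (nhds 2⁻¹) := by
    have := hratio.inv₀ (by norm_num)
    apply this.congr'
    filter_upwards [hlog.eventually_gt_atTop 0] with p hp
    rw [inv_div]
  set c : ℝ := 2 * (Real.sqrt (2*π))⁻¹ with hc
  have hc0 : (0:ℝ) ≤ c := by positivity
  set F : ℕ → ℝ := fun p => c * Real.exp (-q/2) * Real.sqrt (Real.log p / t p) with hF_def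
  have hF : Tendsto F atTop (nhds L) := by
    have hs := (Real.continuous_sqrt.tendsto (2:ℝ)⁻¹).comp hinv
    have hlim := (tendsto_const_nhds (x := c * Real.exp (-q/2)) (f := atTop (α := ℕ))).mul hs
    have heq : c * Real.exp (-q/2) * Real.sqrt 2⁻¹ = L := by
      rw [hq, hc]; exact aux_const_eval
    rw [← heq]
    exact hlim
  have hG : Tendsto (fun p : ℕ => F p * (1 - (t p)⁻¹)) atTop (nhds L) := by
    have h0 : Tendsto (fun p : ℕ => (t p)⁻¹) atTop (nhds 0) := ht_top.inv_tendsto_atTop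
    have := hF.mul ((tendsto_const_nhds (x := (1:ℝ))).sub h0)
    simpa using this
  have hev : ∀ᶠ p : ℕ in atTop, 4 ≤ t p ∧ 1 ≤ Real.log p ∧ 1 ≤ (p:ℝ) := by
    filter_upwards [ht_top.eventually_ge_atTop 4, hlog.eventually_ge_atTop 1,
      eventually_ge_atTop 1] with p h1 h2 h3
    exact ⟨h1, h2, by exact_mod_cast h3⟩
  apply tendsto_of_tendsto_of_tendsto_of_le_of_le' hG hF
  · -- lower bound
    filter_upwards [hev] with p ⟨h4, hlg, hp1⟩
    have ht0 : (0:ℝ) < t p := by linarith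
    have hs2 : 2 ≤ Real.sqrt (t p) := by
      rw [show (2:ℝ) = Real.sqrt 4 by rw [show (4:ℝ) = 2^2 by norm_num, Real.sqrt_sq]; norm_num]
      exact Real.sqrt_le_sqrt h4
    have hs0 : (0:ℝ) < Real.sqrt (t p) := by linarith
    have hsq : (Real.sqrt (t p))^2 = t p := Real.sq_sqrt ht0.le
    have hp0 : (0:ℝ) < p := by linarith
    have hexp : Real.exp (-(t p)/2) = Real.exp (-q/2) * (p:ℝ)⁻¹ * Real.sqrt (Real.log p) := by
      have e1 : -(t p)/2 = -q/2 + (-Real.log p) + (Real.log (Real.log p))/2 := by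
        simp only [ht_def]; ring
      have e2 : Real.exp (Real.log (Real.log p)/2) = Real.sqrt (Real.log p) := by
        rw [Real.sqrt_eq_rpow, Real.rpow_def_of_pos (by linarith)]
        ring_nf
      rw [e1, Real.exp_add, Real.exp_add, Real.exp_neg, Real.exp_log hp0, e2]
    have hsplit : Real.sqrt (Real.log p / t p)
        = Real.sqrt (Real.log p) / Real.sqrt (t p) := Real.sqrt_div (by linarith) _
    calc F p * (1 - (t p)⁻¹)
        = (p:ℝ) * (c * (((Real.sqrt (t p))⁻¹ - ((Real.sqrt (t p))^3)⁻¹)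
            * Real.exp (-(Real.sqrt (t p))^2/2))) := by
          rw [hsq, hexp]; simp only [hF_def, hsplit]
          have hs0' : Real.sqrt (t p) ≠ 0 := ne_of_gt hs0
          have hp0' : (p:ℝ) ≠ 0 := ne_of_gt hp0
          nth_rewrite 2 [← hsq]
          field_simp
      _ ≤ (p:ℝ) * (c * ∫ x in Ioi (Real.sqrt (t p)), Real.exp (-x^2/2)) := by
          gcongr
          exact aux_tail_lower hs2
      _ = (p:ℝ) * ((gaussianReal 0 1) {x : ℝ | t p ≤ x^2}).toReal := by
          rw [aux_gauss_tail ht0]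
      _ = (p:ℝ) * ((gaussianReal 0 1)
            {x : ℝ | q + 2*Real.log p - Real.log (Real.log p) ≤ x^2}).toReal := by
          simp only [ht_def]
  · -- upper bound
    filter_upwards [hev] with p ⟨h4, hlg, hp1⟩
    have ht0 : (0:ℝ) < t p := by linarith
    have hs0 : (0:ℝ) < Real.sqrt (t p) := Real.sqrt_pos.mpr ht0
    have hsq : (Real.sqrt (t p))^2 = t p := Real.sq_sqrt ht0.le
    have hp0 : (0:ℝ) < p := by linarith
    have hexp : Real.exp (-(t p)/2) = Real.exp (-q/2) * (p:ℝ)⁻¹ * Real.sqrt (Real.log p) := by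
      have e1 : -(t p)/2 = -q/2 + (-Real.log p) + (Real.log (Real.log p))/2 := by
        simp only [ht_def]; ring
      have e2 : Real.exp (Real.log (Real.log p)/2) = Real.sqrt (Real.log p) := by
        rw [Real.sqrt_eq_rpow, Real.rpow_def_of_pos (by linarith)]
        ring_nf
      rw [e1, Real.exp_add, Real.exp_add, Real.exp_neg, Real.exp_log hp0, e2]
    have hsplit : Real.sqrt (Real.log p / t p)
        = Real.sqrt (Real.log p) / Real.sqrt (t p) := Real.sqrt_div (by linarith) _
    calc (p:ℝ) * ((gaussianReal 0 1)
            {x : ℝ | q + 2*Real.log p - Real.log (Real.log p) ≤ x^2}).toReal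
        = (p:ℝ) * ((gaussianReal 0 1) {x : ℝ | t p ≤ x^2}).toReal := by
          simp only [ht_def]
      _ = (p:ℝ) * (c * ∫ x in Ioi (Real.sqrt (t p)), Real.exp (-x^2/2)) := by
          rw [aux_gauss_tail ht0]
      _ ≤ (p:ℝ) * (c * (Real.exp (-(Real.sqrt (t p))^2/2) / Real.sqrt (t p))) := by
          gcongr
          exact aux_tail_upper hs0
      _ = F p := by
          rw [hsq, hexp]; simp only [hF_def, hsplit]
          have hs0' : Real.sqrt (t p) ≠ 0 := ne_of_gt hs0
          have hp0' : (p:ℝ) ≠ 0 := ne_of_gt hp0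
          field_simp

lemma aux_sup_iff {p : ℕ} (hp : 0 < p) (f : Fin p → ℝ) (a : ℝ) :
    a ≤ ⨆ i, f i ↔ ∃ i, a ≤ f i := by
  have : Nonempty (Fin p) := Fin.pos_iff_nonempty.mp hp
  constructor
  · intro h
    obtain ⟨i0, hi0⟩ := Finite.exists_max f
    exact ⟨i0, h.trans (ciSup_le hi0)⟩
  · rintro ⟨i, hi⟩
    exact hi.trans (le_ciSup (Set.Finite.bddAbove (Set.finite_range f)) i)

lemma aux_measure_eq {Ω : Type*} [MeasurableSpace Ω] (P : Measure Ω) [IsProbabilityMeasure P]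
    (Z : ℕ → Ω → ℝ) (hmeas : ∀ i, Measurable (Z i))
    (hindep : iIndepFun Z P)
    (hdist : ∀ i, Measure.map (Z i) P = gaussianReal 0 1)
    {p : ℕ} (hp : 0 < p) (a : ℝ) :
    (P {ω | a ≤ ⨆ i : Fin p, (Z i ω)^2}).toReal
      = 1 - (1 - ((gaussianReal 0 1) {x : ℝ | a ≤ x^2}).toReal)^p := by
  have hA : MeasurableSet {x : ℝ | x^2 < a} :=
    measurableSet_lt (measurable_id.pow_const 2) measurable_const
  have hAc : {x : ℝ | x^2 < a}ᶜ = {x : ℝ | a ≤ x^2} := by ext x; simp [not_lt]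
  set g : ℝ≥0∞ := (gaussianReal 0 1) {x : ℝ | a ≤ x^2} with hg
  have hg1 : g ≤ 1 := prob_le_one
  have hone : (gaussianReal 0 1) {x : ℝ | x^2 < a} = 1 - g := by
    have h1 := prob_compl_eq_one_sub (μ := gaussianReal 0 1) hA
    rw [hAc, ← hg] at h1
    rw [h1, ENNReal.sub_sub_cancel one_ne_top prob_le_one]
  have hmap : ∀ i : ℕ, P (Z i ⁻¹' {x : ℝ | x^2 < a})
      = (gaussianReal 0 1) {x : ℝ | x^2 < a} := fun i => by
    rw [← hdist i, Measure.map_apply (hmeas i) hA]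
  have hint : P (⋂ i ∈ Finset.range p, Z i ⁻¹' {x : ℝ | x^2 < a}) = (1 - g)^p := by
    rw [hindep.meas_biInter (fun i _ => ⟨{x : ℝ | x^2 < a}, hA, rfl⟩),
      Finset.prod_congr rfl (fun i _ => (hmap i).trans hone),
      Finset.prod_const, Finset.card_range]
  have hsets : {ω | a ≤ ⨆ i : Fin p, (Z i ω)^2}
      = (⋂ i ∈ Finset.range p, Z i ⁻¹' {x : ℝ | x^2 < a})ᶜ := by
    ext ω
    simp only [Set.mem_setOf_eq, Set.mem_compl_iff, Set.mem_iInter, Set.mem_preimage,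
      Finset.mem_range, not_forall, not_lt]
    rw [aux_sup_iff hp]
    constructor
    · rintro ⟨i, hi⟩
      exact ⟨i.1, i.2, hi⟩
    · rintro ⟨i, hi, h⟩
      exact ⟨⟨i, hi⟩, h⟩
  have hmeasInt : MeasurableSet (⋂ i ∈ Finset.range p, Z i ⁻¹' {x : ℝ | x^2 < a}) :=
    MeasurableSet.biInter (Finset.range p).countable_toSet (fun i _ => (hmeas i) hA)
  rw [hsets, prob_compl_eq_one_sub hmeasInt, hint,
    ENNReal.toReal_sub_of_le (pow_le_one' (by simpa using tsub_le_self) p) one_ne_top,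
    ENNReal.toReal_pow, ENNReal.toReal_sub_of_le hg1 one_ne_top]
  simp

/-- Fix `α ∈ (0,1)` and let `q = −log π − 2 log(−log(1−α))` be the `(1−α)`-quantile
of the `Gumbel(−log π, 2)` distribution.  If `(Z i)` are i.i.d. standard normal and
`T̃_p = max_{1 ≤ i ≤ p} Z_i² − 2 log p + log log p`, then `P(T̃_p ≥ q) → α` as `p → ∞`:
the test rejecting when `T̃_p ≥ q` has asymptotic level exactly `α`. -/
theorem covariance_type_test_asymptotic_level
    {Ω : Type*} [MeasurableSpace Ω] (P : Measure Ω) [IsProbabilityMeasure P]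
    (Z : ℕ → Ω → ℝ) (hmeas : ∀ i, Measurable (Z i))
    (hindep : iIndepFun Z P)
    (hdist : ∀ i, Measure.map (Z i) P = gaussianReal 0 1)
    (α : ℝ) (hα : α ∈ Set.Ioo (0 : ℝ) 1)
    (q : ℝ) (hq : q = -Real.log π - 2 * Real.log (-Real.log (1 - α))) :
    Tendsto
      (fun p : ℕ =>
        (P {ω | q ≤ (⨆ i : Fin p, (Z i ω) ^ 2) - 2 * Real.log p + Real.log (Real.log p)}).toReal)
      atTop (nhds α) := by
  obtain ⟨hα0, hα1⟩ := hα
  have h1α : 0 < 1 - α := by linarith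
  set L : ℝ := -Real.log (1 - α) with hL_def
  have hlogneg : Real.log (1 - α) < 0 := Real.log_neg h1α (by linarith)
  have hL : 0 < L := by rw [hL_def]; linarith
  have hqL : Real.exp (-q/2) = Real.sqrt π * L := by
    rw [hq]
    have he : -(-Real.log π - 2 * Real.log (-Real.log (1-α)))/2
        = Real.log π / 2 + Real.log L := by rw [hL_def]; ring
    rw [he, Real.exp_add, Real.exp_log hL]
    congr 1
    rw [Real.sqrt_eq_rpow, Real.rpow_def_of_pos Real.pi_pos]
    ring_nf
  set t : ℕ → ℝ := fun p : ℕ => q + 2*Real.log p - Real.log (Real.log p) with ht_def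
  set gR : ℕ → ℝ := fun p => ((gaussianReal 0 1) {x : ℝ | t p ≤ x^2}).toReal with hgR_def
  have hpg : Tendsto (fun p : ℕ => (p:ℝ) * gR p) atTop (nhds L) := by
    have := aux_pg_limit q L hL hqL
    simpa [hgR_def, ht_def] using this
  have hgnn : ∀ p, 0 ≤ gR p := fun p => ENNReal.toReal_nonneg
  have hg0 : Tendsto gR atTop (nhds 0) := by
    have hinv : Tendsto (fun p : ℕ => ((p:ℝ))⁻¹) atTop (nhds 0) :=
      tendsto_inv_atTop_zero.comp tendsto_natCast_atTop_atTop
    have hmul := hpg.mul hinv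
    rw [mul_zero] at hmul
    apply hmul.congr'
    filter_upwards [eventually_gt_atTop 0] with p hp
    have hp0 : (p:ℝ) ≠ 0 := Nat.cast_ne_zero.mpr (Nat.pos_iff_ne_zero.mp hp)
    field_simp
  have hgpos : ∀ᶠ p : ℕ in atTop, 0 < gR p := by
    filter_upwards [hpg.eventually (eventually_gt_nhds hL), eventually_gt_atTop 0] with p h1 h2
    by_contra hcon
    push_neg at hcon
    have : gR p = 0 := le_antisymm hcon (hgnn p)
    rw [this, mul_zero] at h1
    exact absurd h1 (lt_irrefl 0)
  have hglt1 : ∀ᶠ p : ℕ in atTop, gR p < 1 := hg0.eventually (eventually_lt_nhds zero_lt_one)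
  have hslope : Tendsto (fun p : ℕ => Real.log (1 - gR p) / gR p) atTop (nhds (-1)) := by
    have hd : HasDerivAt (fun x : ℝ => Real.log (1 - x)) (-1) 0 := by
      have h := ((hasDerivAt_id (0:ℝ)).const_sub 1).log (by norm_num)
      simpa using h
    have hs := hasDerivAt_iff_tendsto_slope.mp hd
    have hgne : Tendsto gR atTop (𝓝[≠] (0:ℝ)) := by
      rw [tendsto_nhdsWithin_iff]
      exact ⟨hg0, hgpos.mono fun p hp => ne_of_gt hp⟩
    have hcomp := hs.comp hgne
    apply hcomp.congr
    intro p
    simp [slope_def_field]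
  have hplog : Tendsto (fun p : ℕ => (p:ℝ) * Real.log (1 - gR p)) atTop
      (nhds (Real.log (1-α))) := by
    have hmul := hpg.mul hslope
    rw [show L * (-1) = Real.log (1-α) by rw [hL_def]; ring] at hmul
    apply hmul.congr'
    filter_upwards [hgpos] with p hp
    have : gR p ≠ 0 := ne_of_gt hp
    field_simp
  have hpow : Tendsto (fun p : ℕ => (1 - gR p)^p) atTop (nhds (1 - α)) := by
    have hexp := (Real.continuous_exp.tendsto _).comp hplog
    rw [Real.exp_log h1α] at hexp
    apply hexp.congr'
    filter_upwards [hgpos, hglt1] with p h0 h1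
    simp only [Function.comp_apply]
    rw [← Real.log_pow, Real.exp_log (pow_pos (by linarith) p)]
  have hfinal := (tendsto_const_nhds (x := (1:ℝ)) (f := atTop (α := ℕ))).sub hpow
  rw [show (1:ℝ) - (1 - α) = α by ring] at hfinal
  apply Tendsto.congr' _ hfinal
  filter_upwards [eventually_gt_atTop 0] with p hp
  have hsets : {ω | q ≤ (⨆ i : Fin p, (Z i ω) ^ 2) - 2 * Real.log p + Real.log (Real.log p)}
      = {ω | t p ≤ ⨆ i : Fin p, (Z i ω)^2} := by
    ext ω
    simp only [Set.mem_setOf_eq, ht_def]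
    constructor <;> intro h <;> linarith
  rw [hsets, aux_measure_eq P Z hmeas hindep hdist hp (t p)]
end
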